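/- Let α satisfy assumptions (I)–(III) with degeneracy parameter μ. Then for every u ∈ V¹_α(x₀,ℓ) one has lim_{x → x₀⁺} (x − x₀)·|u(x)|² = 0. -/

import Mathlib

open MeasureTheory Set Filter Topology

/-- Assumptions (I)-(III) on the degenerate weight `α` on `[x₀, ℓ]`, with degeneracy
parameter `μ`: `α` is positive on `(x₀, ℓ]` and vanishes at `x₀`; `α` is continuous on
`[x₀, ℓ]` and `C¹` on `(x₀, ℓ]` with derivative `α'`; and
`μ = sup_{x₀ < x ≤ ℓ} (x - x₀)|α'(x)|/α(x) = lim_{x → x₀⁺} (x - x₀)|α'(x)|/α(x) < 2`. -/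
def DegWeight (x₀ ℓ μ : ℝ) (α α' : ℝ → ℝ) : Prop :=
  (∀ x ∈ Ioc x₀ ℓ, 0 < α x) ∧ α x₀ = 0 ∧
  ContinuousOn α (Icc x₀ ℓ) ∧
  (∀ x ∈ Ioc x₀ ℓ, HasDerivWithinAt α (α' x) (Ioc x₀ ℓ) x) ∧
  ContinuousOn α' (Ioc x₀ ℓ) ∧
  IsLUB ((fun x => (x - x₀) * |α' x| / α x) '' Ioc x₀ ℓ) μ ∧
  Tendsto (fun x => (x - x₀) * |α' x| / α x) (𝓝[>] x₀) (𝓝 μ) ∧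
  μ < 2

/-- `u ∈ V¹_α(x₀, ℓ)` (real-valued): `u ∈ L²(x₀, ℓ)`, `u` is locally absolutely continuous
on `(x₀, ℓ]` with a.e. derivative `u'` (expressed via the fundamental theorem of calculus on
compact subintervals of `(x₀, ℓ]`), and `√α · u' ∈ L²(x₀, ℓ)`. -/
def MemV1 (x₀ ℓ : ℝ) (α u u' : ℝ → ℝ) : Prop :=
  MemLp u 2 (volume.restrict (Ioo x₀ ℓ)) ∧
  (∀ x y : ℝ, x₀ < x → x ≤ y → y ≤ ℓ →
    IntervalIntegrable u' volume x y ∧ u y - u x = ∫ t in x..y, u' t) ∧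
  MemLp (fun x => Real.sqrt (α x) * u' x) 2 (volume.restrict (Ioo x₀ ℓ))

private lemma holder_two {ν : Measure ℝ} {f g : ℝ → ℝ}
    (hf0 : 0 ≤ᵐ[ν] f) (hg0 : 0 ≤ᵐ[ν] g)
    (hf : MemLp f 2 ν) (hg : MemLp g 2 ν) :
    ∫ a, f a * g a ∂ν ≤ Real.sqrt (∫ a, f a ^ 2 ∂ν) * Real.sqrt (∫ a, g a ^ 2 ∂ν) := by
  have hpq : Real.HolderConjugate 2 2 := ⟨by norm_num, by norm_num, by norm_num⟩
  have h2 : ENNReal.ofReal (2 : ℝ) = 2 := by norm_num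
  have hf' : MemLp f (ENNReal.ofReal (2:ℝ)) ν := h2.symm ▸ hf
  have hg' : MemLp g (ENNReal.ofReal (2:ℝ)) ν := h2.symm ▸ hg
  have H := MeasureTheory.integral_mul_le_Lp_mul_Lq_of_nonneg hpq hf0 hg0 hf' hg'
  have e : ∀ x : ℝ, x ^ (2:ℝ) = x ^ (2:ℕ) := fun x => by
    rw [show (2:ℝ) = ((2:ℕ):ℝ) by norm_num, Real.rpow_natCast]
  simp_rw [e] at H
  calc ∫ a, f a * g a ∂ν
      ≤ (∫ a, f a ^ (2:ℕ) ∂ν) ^ (1/(2:ℝ)) * (∫ a, g a ^ (2:ℕ) ∂ν) ^ (1/(2:ℝ)) := H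
    _ = _ := by rw [Real.sqrt_eq_rpow, Real.sqrt_eq_rpow]

set_option maxHeartbeats 2000000 in
/-- If `α` satisfies (I)-(III) with degeneracy parameter `μ`, then every
`u ∈ V¹_α(x₀, ℓ)` satisfies `lim_{x → x₀⁺} (x - x₀)·|u(x)|² = 0`. -/
theorem limit_xu_sq (x₀ ℓ μ : ℝ) (α α' : ℝ → ℝ) (hxl : x₀ < ℓ)
    (h : DegWeight x₀ ℓ μ α α') (u u' : ℝ → ℝ) (hu : MemV1 x₀ ℓ α u u') :
    Tendsto (fun x => (x - x₀) * (u x) ^ 2) (𝓝[>] x₀) (𝓝 0) := by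
  obtain ⟨hαpos, hα0, hαc, hαd, hα'c, hlub, -, hμ2⟩ := h
  obtain ⟨huL2, hFTC, hfL2⟩ := hu
  set f : ℝ → ℝ := fun t => Real.sqrt (α t) * u' t with hf_def
  have hαℓ : 0 < α ℓ := hαpos ℓ ⟨hxl, le_rfl⟩
  set K : ℝ := (ℓ - x₀)^2 / α ℓ with hK_def
  have hKpos : 0 < K := div_pos (by nlinarith) hαℓ
  clear_value K
  -- Step 1: the pointwise lower bound (t - x₀)² ≤ K α(t)
  have hub : ∀ s ∈ Ioc x₀ ℓ, (s - x₀) * |α' s| ≤ μ * α s := by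
    intro s hs
    have h1 : (s - x₀) * |α' s| / α s ≤ μ := hlub.1 (mem_image_of_mem _ hs)
    have h2 : 0 < α s := hαpos s hs
    calc (s - x₀) * |α' s| = (s - x₀) * |α' s| / α s * α s := by field_simp
      _ ≤ μ * α s := mul_le_mul_of_nonneg_right h1 h2.le
  have key : ∀ t ∈ Ioc x₀ ℓ, (t - x₀)^2 ≤ K * α t := by
    intro t ht
    have hαt := hαpos t ht
    rcases eq_or_lt_of_le ht.2 with rfl | htl
    · rw [hK_def, div_mul_cancel₀ _ hαt.ne']
    · set g : ℝ → ℝ := fun s => (s - x₀)^2 / α s with hg_def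
      have hmono : StrictMonoOn g (Icc t ℓ) := by
        apply strictMonoOn_of_deriv_pos (convex_Icc t ℓ)
        · exact ContinuousOn.div
            (Continuous.continuousOn (by continuity))
            (hαc.mono (Icc_subset_Icc ht.1.le le_rfl))
            (fun s hs => (hαpos s ⟨ht.1.trans_le hs.1, hs.2⟩).ne')
        · intro s hs
          rw [interior_Icc] at hs
          have hs' : s ∈ Ioc x₀ ℓ := ⟨ht.1.trans hs.1, hs.2.le⟩
          have hαs := hαpos s hs'
          have hda : HasDerivAt α (α' s) s :=
            (hαd s hs').hasDerivAt (Ioc_mem_nhds hs'.1 hs.2)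
          have hnum : HasDerivAt (fun s : ℝ => (s - x₀)^2) (2*(s-x₀)) s := by
            simpa using ((hasDerivAt_id s).sub_const x₀).fun_pow 2
          have hdg : HasDerivAt g ((2*(s - x₀) * α s - (s - x₀)^2 * α' s) / α s ^ 2) s :=
            hnum.div hda hαs.ne'
          rw [hdg.deriv]
          have h1 := hub s hs'
          have h3 : 0 < s - x₀ := sub_pos.2 hs'.1
          have h2 : (s - x₀) * α' s ≤ (s - x₀) * |α' s| :=
            mul_le_mul_of_nonneg_left (le_abs_self _) h3.le
          apply div_pos _ (pow_pos hαs 2)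
          nlinarith [mul_le_mul_of_nonneg_left (h2.trans h1) h3.le, mul_pos h3 hαs]
      have hgl := (hmono ⟨le_rfl, htl.le⟩ ⟨htl.le, le_rfl⟩ htl).le
      have h4 : (t - x₀)^2 / α t ≤ (ℓ - x₀)^2 / α ℓ := hgl
      rw [div_le_div_iff₀ hαt hαℓ] at h4
      rw [hK_def, div_mul_eq_mul_div, le_div_iff₀ hαℓ]
      linarith
  -- Step 2: the tail of ∫ (√α u')² tends to 0
  have hf_sq_int : IntegrableOn (fun t => f t ^ 2) (Ioo x₀ ℓ) := hfL2.integrable_sq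
  set T : ℝ → ℝ := fun y => ∫ t in Ioc x₀ y, f t ^ 2 with hT_def
  have hT0 : Tendsto T (𝓝[>] x₀) (𝓝 0) := by
    have hIcc : IntegrableOn (fun t => f t ^ 2) (Icc x₀ ℓ) := by
      rwa [integrableOn_Icc_iff_integrableOn_Ioo]
    have hc : ContinuousOn T (Icc x₀ ℓ) :=
      intervalIntegral.continuousOn_primitive hIcc
    have h1 : ContinuousWithinAt T (Icc x₀ ℓ) x₀ := hc x₀ ⟨le_rfl, hxl.le⟩
    have h3 : Tendsto T (𝓝[Icc x₀ ℓ] x₀) (𝓝 0) := by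
      have h2 : T x₀ = 0 := by simp [hT_def]
      simpa [ContinuousWithinAt, h2] using h1
    have h4 : 𝓝[Ioc x₀ ℓ] x₀ = 𝓝[>] x₀ := nhdsWithin_Ioc_eq_nhdsGT hxl
    exact h4 ▸ (h3.mono_left (nhdsWithin_mono _ Ioc_subset_Icc_self))
  -- Step 3: main estimate
  have est : ∀ x y, x₀ < x → x ≤ y → y < ℓ →
      Real.sqrt (x - x₀) * |u x| ≤ Real.sqrt (y - x₀) * |u y| +
        Real.sqrt K * Real.sqrt (T y) := by
    intro x y hx hxy hyl
    have hT_nonneg : 0 ≤ T y := setIntegral_nonneg measurableSet_Ioc (fun t _ => sq_nonneg _)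
    have hx0 : 0 < x - x₀ := sub_pos.2 hx
    have hsub : Ioc x y ⊆ Ioo x₀ ℓ := fun t ht => ⟨hx.trans_le ht.1.le, ht.2.trans_lt hyl⟩
    have hsub' : Ioc x y ⊆ Ioc x₀ ℓ := fun t ht => ⟨hx.trans ht.1, ht.2.trans hyl.le⟩
    have hle : volume.restrict (Ioc x y) ≤ volume.restrict (Ioo x₀ ℓ) :=
      Measure.restrict_mono hsub le_rfl
    have hF1 : MemLp (fun t => |f t|) 2 (volume.restrict (Ioc x y)) := by
      simpa [Real.norm_eq_abs] using (hfL2.mono_measure hle).norm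
    have hIccsub : Icc x y ⊆ Icc x₀ ℓ := Icc_subset_Icc hx.le hyl.le
    have hαpos' : ∀ t ∈ Icc x y, 0 < α t := fun t ht =>
      hαpos t ⟨hx.trans_le ht.1, ht.2.trans hyl.le⟩
    have hcont2 : ContinuousOn (fun t => (Real.sqrt (α t))⁻¹) (Icc x y) :=
      (Real.continuous_sqrt.comp_continuousOn (hαc.mono hIccsub)).inv₀
        (fun t ht => (Real.sqrt_pos.2 (hαpos' t ht)).ne')
    have hF2int : IntegrableOn (fun t => ((Real.sqrt (α t))⁻¹)^2) (Ioc x y) :=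
      ((hcont2.pow 2).integrableOn_Icc).mono_set Ioc_subset_Icc_self
    have hF2meas : AEStronglyMeasurable (fun t => (Real.sqrt (α t))⁻¹)
        (volume.restrict (Ioc x y)) :=
      (hcont2.mono Ioc_subset_Icc_self).aestronglyMeasurable measurableSet_Ioc
    have hF2 : MemLp (fun t => (Real.sqrt (α t))⁻¹) 2 (volume.restrict (Ioc x y)) :=
      (memLp_two_iff_integrable_sq hF2meas).2 hF2int
    have hCS := holder_two (Eventually.of_forall (fun t => abs_nonneg (f t)))
      (Eventually.of_forall (fun t => inv_nonneg.2 (Real.sqrt_nonneg _))) hF1 hF2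
    have e1 : ∫ t in Ioc x y, |f t| * (Real.sqrt (α t))⁻¹ = ∫ t in Ioc x y, |u' t| := by
      apply setIntegral_congr_fun measurableSet_Ioc
      intro t ht
      have hs : 0 < Real.sqrt (α t) := Real.sqrt_pos.2 (hαpos t (hsub' ht))
      simp only [hf_def, abs_mul, abs_of_nonneg hs.le]
      field_simp
    have hint_y : IntegrableOn (fun t => f t ^ 2) (Ioc x₀ y) :=
      hf_sq_int.mono_set (fun t ht => ⟨ht.1, ht.2.trans_lt hyl⟩)
    have e2 : ∫ t in Ioc x y, |f t| ^ 2 ≤ T y := by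
      have habs : ∀ t, |f t| ^ 2 = f t ^ 2 := fun t => sq_abs _
      simp_rw [habs]
      exact setIntegral_mono_set hint_y (Eventually.of_forall (fun t => sq_nonneg _))
        (HasSubset.Subset.eventuallyLE (Ioc_subset_Ioc_left hx.le))
    have hint_inv : IntegrableOn (fun t => (α t)⁻¹) (Ioc x y) := by
      apply (((hαc.mono hIccsub).inv₀ (fun t ht => (hαpos' t ht).ne')).integrableOn_Icc).mono_set
        Ioc_subset_Icc_self
    have hint_cmp_cont : ContinuousOn (fun t => K * ((t - x₀)^2)⁻¹) (Icc x y) := by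
      apply ContinuousOn.mul continuousOn_const
      exact (((continuous_id.sub continuous_const).pow 2).continuousOn).inv₀
        (fun t ht => by
          have h' : t - x₀ ≠ 0 := ne_of_gt (sub_pos.2 (hx.trans_le ht.1))
          exact pow_ne_zero 2 h')
    have hint_cmp : IntegrableOn (fun t => K * ((t - x₀)^2)⁻¹) (Ioc x y) :=
      hint_cmp_cont.integrableOn_Icc.mono_set Ioc_subset_Icc_self
    have e3 : ∫ t in Ioc x y, ((Real.sqrt (α t))⁻¹) ^ 2 ≤ K * (x - x₀)⁻¹ := by
      have e3a : ∫ t in Ioc x y, ((Real.sqrt (α t))⁻¹) ^ 2 = ∫ t in Ioc x y, (α t)⁻¹ := by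
        apply setIntegral_congr_fun measurableSet_Ioc
        intro t ht
        have h0 : 0 ≤ α t := (hαpos t (hsub' ht)).le
        simp only [inv_pow, Real.sq_sqrt h0]
      have e3b : ∫ t in Ioc x y, (α t)⁻¹ ≤ ∫ t in Ioc x y, K * ((t - x₀)^2)⁻¹ := by
        apply setIntegral_mono_on hint_inv hint_cmp measurableSet_Ioc
        intro t ht
        have hαt := hαpos t (hsub' ht)
        have hp : 0 < (t - x₀)^2 := by
          have : 0 < t - x₀ := sub_pos.2 (hx.trans ht.1)
          positivity
        have h5 : 1/(α t) ≤ K/((t - x₀)^2) := by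
          rw [div_le_div_iff₀ hαt hp]
          have := key t (hsub' ht)
          linarith
        simpa [one_div, div_eq_mul_inv] using h5
      have e3c : ∫ t in Ioc x y, K * ((t - x₀)^2)⁻¹ ≤ K * (x - x₀)⁻¹ := by
        rw [← intervalIntegral.integral_of_le hxy]
        have hder : ∀ t ∈ uIcc x y,
            HasDerivAt (fun s => -(s - x₀)⁻¹ * K) (K * ((t - x₀)^2)⁻¹) t := by
          intro t ht
          rw [uIcc_of_le hxy] at ht
          have hne : t - x₀ ≠ 0 := ne_of_gt (sub_pos.2 (hx.trans_le ht.1))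
          have h6 : HasDerivAt (fun s : ℝ => (s - x₀)⁻¹) (-1 / (t - x₀)^2) t := by
            simpa using ((hasDerivAt_id t).sub_const x₀).fun_inv hne
          have h7 := (h6.fun_neg).mul_const K
          rw [show K * ((t - x₀)^2)⁻¹ = -(-1 / (t - x₀)^2) * K by ring]
          exact h7
        have hii : IntervalIntegrable (fun t => K * ((t - x₀)^2)⁻¹) volume x y := by
          apply ContinuousOn.intervalIntegrable
          rw [uIcc_of_le hxy]
          exact hint_cmp_cont
        rw [intervalIntegral.integral_eq_sub_of_hasDerivAt hder hii]
        have h8 : 0 < y - x₀ := sub_pos.2 (hx.trans_le hxy)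
        have h9 : 0 ≤ (y - x₀)⁻¹ := by positivity
        ring_nf
        nlinarith [mul_pos hKpos (inv_pos.2 h8)]
      calc ∫ t in Ioc x y, ((Real.sqrt (α t))⁻¹) ^ 2 = ∫ t in Ioc x y, (α t)⁻¹ := e3a
        _ ≤ ∫ t in Ioc x y, K * ((t - x₀)^2)⁻¹ := e3b
        _ ≤ K * (x - x₀)⁻¹ := e3c
    have h5 : |u y - u x| ≤ Real.sqrt (T y) * Real.sqrt (K * (x - x₀)⁻¹) := by
      obtain ⟨hii, heq⟩ := hFTC x y hx hxy hyl.le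
      rw [heq]
      calc |∫ t in x..y, u' t| ≤ ∫ t in x..y, |u' t| :=
            intervalIntegral.abs_integral_le_integral_abs hxy
        _ = ∫ t in Ioc x y, |u' t| := intervalIntegral.integral_of_le hxy
        _ = ∫ t in Ioc x y, |f t| * (Real.sqrt (α t))⁻¹ := e1.symm
        _ ≤ Real.sqrt (∫ t in Ioc x y, |f t| ^ 2) *
              Real.sqrt (∫ t in Ioc x y, ((Real.sqrt (α t))⁻¹) ^ 2) := hCS
        _ ≤ Real.sqrt (T y) * Real.sqrt (K * (x - x₀)⁻¹) :=
            mul_le_mul (Real.sqrt_le_sqrt e2) (Real.sqrt_le_sqrt e3)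
              (Real.sqrt_nonneg _) (Real.sqrt_nonneg _)
    have hsK : Real.sqrt (x - x₀) * Real.sqrt (K * (x - x₀)⁻¹) = Real.sqrt K := by
      rw [← Real.sqrt_mul hx0.le, show (x - x₀) * (K * (x - x₀)⁻¹) = K by field_simp]
    have habs : |u x| ≤ |u y| + |u y - u x| := by
      have h := abs_sub_abs_le_abs_sub (u x) (u y)
      rw [abs_sub_comm] at h
      linarith
    calc Real.sqrt (x - x₀) * |u x|
        ≤ Real.sqrt (x - x₀) * (|u y| + |u y - u x|) :=
          mul_le_mul_of_nonneg_left habs (Real.sqrt_nonneg _)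
      _ = Real.sqrt (x - x₀) * |u y| + Real.sqrt (x - x₀) * |u y - u x| := by ring
      _ ≤ Real.sqrt (y - x₀) * |u y| + Real.sqrt K * Real.sqrt (T y) := by
          apply add_le_add
          · exact mul_le_mul_of_nonneg_right (Real.sqrt_le_sqrt (by linarith)) (abs_nonneg _)
          · calc Real.sqrt (x - x₀) * |u y - u x|
                ≤ Real.sqrt (x - x₀) * (Real.sqrt (T y) * Real.sqrt (K * (x - x₀)⁻¹)) :=
                  mul_le_mul_of_nonneg_left h5 (Real.sqrt_nonneg _)
              _ = Real.sqrt K * Real.sqrt (T y) := by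
                  rw [mul_comm (Real.sqrt (T y)), ← mul_assoc, hsK, mul_comm]
  -- Step 4: good points from u ∈ L²
  have good : ∀ ε > 0, ∀ c, x₀ < c → c ≤ ℓ →
      ∃ y, x₀ < y ∧ y < c ∧ (y - x₀) * (u y)^2 < ε := by
    intro ε hε c hc hcℓ
    by_contra hcon
    push_neg at hcon
    have hu2' : Integrable (fun t => (u t)^2) (volume.restrict (Ioo x₀ ℓ)) := huL2.integrable_sq
    have hu2 : IntegrableOn (fun t => (u t)^2) (Ioo x₀ c) :=
      IntegrableOn.mono_set hu2' (Ioo_subset_Ioo le_rfl hcℓ)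
    have hint : IntegrableOn (fun t => ε * (t - x₀)⁻¹) (Ioo x₀ c) := by
      apply Integrable.mono' hu2
      · exact (((measurable_id.sub_const x₀).inv.const_mul ε).aestronglyMeasurable)
      · rw [ae_restrict_iff' measurableSet_Ioo]
        filter_upwards with t ht
        have h1 : 0 < t - x₀ := sub_pos.2 ht.1
        have h2 := hcon t ht.1 ht.2
        rw [Real.norm_eq_abs, abs_of_nonneg (by positivity), ← div_eq_mul_inv,
          div_le_iff₀ h1]
        linarith
    have hint2 : IntegrableOn (fun t => (t - x₀)⁻¹) (Ioo x₀ c) := by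
      have h3 := hint.const_mul ε⁻¹
      simpa [IntegrableOn, ← mul_assoc, inv_mul_cancel₀ hε.ne'] using h3
    have h4 : IntervalIntegrable (fun t => (t - x₀)⁻¹) volume x₀ c :=
      (intervalIntegrable_iff_integrableOn_Ioo_of_le hc.le).2 hint2
    rw [intervalIntegrable_sub_inv_iff] at h4
    rcases h4 with h5 | h6
    · exact hc.ne h5
    · exact h6 (by rw [uIcc_of_le hc.le]; exact left_mem_Icc.2 hc.le)
  -- Step 5: conclusion
  rw [NormedAddCommGroup.tendsto_nhds_zero]
  intro ε hε
  have hεs : 0 < Real.sqrt ε := Real.sqrt_pos.2 hε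
  have hTK : Tendsto (fun y => Real.sqrt K * Real.sqrt (T y)) (𝓝[>] x₀) (𝓝 0) := by
    have h1 : Tendsto (fun y => Real.sqrt (T y)) (𝓝[>] x₀) (𝓝 (Real.sqrt 0)) :=
      (Real.continuous_sqrt.tendsto 0).comp hT0
    have h2 := h1.const_mul (Real.sqrt K)
    simpa using h2
  have hev : ∀ᶠ y in 𝓝[>] x₀, Real.sqrt K * Real.sqrt (T y) < Real.sqrt ε / 2 :=
    hTK.eventually (gt_mem_nhds (by positivity))
  have hev2 : ∀ᶠ y in 𝓝[>] x₀, y < ℓ :=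
    eventually_of_mem (Ioo_mem_nhdsGT hxl) (fun y hy => hy.2)
  obtain ⟨c, hc, hsubc⟩ := mem_nhdsGT_iff_exists_Ioo_subset.1 (hev.and hev2)
  obtain ⟨y, hy1, hy2, hy3⟩ := good ((Real.sqrt ε / 2)^2)
    (pow_pos (div_pos hεs two_pos) 2) (min c ℓ) (lt_min hc hxl) (min_le_right _ _)
  have hyc : y < c := hy2.trans_le (min_le_left _ _)
  obtain ⟨hyE1, hyE2⟩ := hsubc ⟨hy1, hyc⟩
  have hyb : Real.sqrt (y - x₀) * |u y| < Real.sqrt ε / 2 := by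
    have h1 : Real.sqrt ((y - x₀) * (u y)^2) < Real.sqrt ε / 2 := by
      calc Real.sqrt ((y - x₀) * (u y)^2) < Real.sqrt ((Real.sqrt ε / 2)^2) :=
            Real.sqrt_lt_sqrt (mul_nonneg (sub_pos.2 hy1).le (sq_nonneg _)) hy3
        _ = Real.sqrt ε / 2 := Real.sqrt_sq (by positivity)
    rwa [Real.sqrt_mul (sub_pos.2 hy1).le, Real.sqrt_sq_eq_abs] at h1
  filter_upwards [Ioo_mem_nhdsGT hy1] with x hx
  have hb := est x y hx.1 hx.2.le hyE2
  have hlt : Real.sqrt (x - x₀) * |u x| < Real.sqrt ε := by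
    calc Real.sqrt (x - x₀) * |u x|
        ≤ Real.sqrt (y - x₀) * |u y| + Real.sqrt K * Real.sqrt (T y) := hb
      _ < Real.sqrt ε / 2 + Real.sqrt ε / 2 := add_lt_add hyb hyE1
      _ = Real.sqrt ε := by ring
  have hx0 : 0 < x - x₀ := sub_pos.2 hx.1
  have heq : (x - x₀) * (u x)^2 = (Real.sqrt (x - x₀) * |u x|)^2 := by
    rw [mul_pow, Real.sq_sqrt hx0.le, sq_abs]
  rw [Real.norm_eq_abs, abs_of_nonneg (mul_nonneg hx0.le (sq_nonneg _)), heq]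
  calc (Real.sqrt (x - x₀) * |u x|)^2 < (Real.sqrt ε)^2 := by
        nlinarith [hlt, mul_nonneg (Real.sqrt_nonneg (x - x₀)) (abs_nonneg (u x))]
    _ = ε := Real.sq_sqrt hε.le
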